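/- The class of functions 𝓕₁ = {x ↦ exp(−‖x − v‖₂²/(2σ²)) : σ > 0, v ∈ ℝ^d} on ℝ^d is a VC-subgraph class with VC index at most d + 4. -/

import Mathlib

/-- A collection of subsets shatters a finite set `F` if every subset of `F`
is cut out by an element of the collection. -/
def ShattersSet {S : Type*} (C : Set (Set S)) (F : Finset S) : Prop :=
  ∀ T ⊆ F, ∃ c ∈ C, (F : Set S) ∩ c = (T : Set S)

/-- VC index: the smallest `i` such that no set of size `i` is shattered. -/
noncomputable def vcIndex {S : Type*} (C : Set (Set S)) : ℕ :=
  sInf {i : ℕ | ∀ F : Finset S, F.card = i → ¬ ShattersSet C F}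

/-- The subgraph of a real-valued function. -/
def subgraph {M : Type*} (f : M → ℝ) : Set (M × ℝ) := {p | p.2 < f p.1}

/-- the isotropic Gaussian kernel feature class on ℝ^d is
VC-subgraph with VC index at most d + 4. -/
theorem vcIndex_isotropic_gaussian (d : ℕ) :
    vcIndex (subgraph ''
      {f : EuclideanSpace ℝ (Fin d) → ℝ |
        ∃ σ : ℝ, 0 < σ ∧ ∃ v : EuclideanSpace ℝ (Fin d),
          f = fun x => Real.exp (-(‖x - v‖ ^ 2 / (2 * σ ^ 2)))}) ≤ d + 4 := by
  classical
  set E := EuclideanSpace ℝ (Fin d)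
  apply Nat.sInf_le
  intro F hcard hshat
  by_cases hy : ∃ p ∈ F, p.2 ≤ 0
  · -- a point with nonpositive second coordinate lies in every subgraph
    obtain ⟨p, hpF, hp2⟩ := hy
    obtain ⟨c, hcC, hFc⟩ := hshat (F.erase p) (F.erase_subset p)
    obtain ⟨f, ⟨σ, hσ, v, hf⟩, rfl⟩ := hcC
    have hpc : p ∈ subgraph f := by
      simp only [subgraph, Set.mem_setOf_eq, hf]
      exact lt_of_le_of_lt hp2 (Real.exp_pos _)
    have hmem : p ∈ ((F.erase p : Finset (E × ℝ)) : Set (E × ℝ)) := by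
      rw [← hFc]; exact ⟨hpF, hpc⟩
    simp at hmem
  · push_neg at hy
    -- all points have positive second coordinate
    let vec : E × ℝ → ℝ × ℝ × ℝ × E := fun p => (‖p.1‖ ^ 2, 1, Real.log p.2, p.1)
    have hnotli : ¬ LinearIndependent ℝ (fun p : ↥F => vec ↑p) := by
      intro hli
      have h1 := hli.fintype_card_le_finrank
      have h2 : Module.finrank ℝ (ℝ × ℝ × ℝ × E) = 3 + d := by
        simp only [Module.finrank_prod, Module.finrank_self]
        rw [show Module.finrank ℝ E = d from finrank_euclideanSpace_fin]
        omega
      rw [Fintype.card_coe, hcard, h2] at h1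
      omega
    obtain ⟨μ, hμsum, i, hi⟩ := Fintype.not_linearIndependent_iff.1 hnotli
    obtain ⟨ν, hνsum, j, hj⟩ : ∃ ν : ↥F → ℝ,
        ∑ i : ↥F, ν i • vec ↑i = 0 ∧ ∃ j : ↥F, 0 < ν j := by
      rcases hi.lt_or_gt with h | h
      · refine ⟨-μ, ?_, i, by simpa using h⟩
        simp only [Pi.neg_apply, neg_smul, Finset.sum_neg_distrib, hμsum, neg_zero]
      · exact ⟨μ, hμsum, i, h⟩
    -- ambient coefficient function
    set μ' : E × ℝ → ℝ := fun p => if h : p ∈ F then ν ⟨p, h⟩ else 0 with hμ'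
    have hμ'eq : ∀ (q : ↥F), μ' ↑q = ν q := by
      rintro ⟨q, hq⟩
      show (if h : q ∈ F then ν ⟨q, h⟩ else 0) = ν ⟨q, hq⟩
      exact dif_pos hq
    have hconv : ∀ (f : E × ℝ → ℝ),
        ∑ p ∈ F, μ' p * f p = ∑ q : ↥F, ν q * f ↑q := by
      intro f
      rw [← Finset.sum_coe_sort F (fun p => μ' p * f p)]
      exact Finset.sum_congr rfl fun q _ => by rw [hμ'eq]
    -- component identities
    have c1 : ∑ p ∈ F, μ' p * ‖p.1‖ ^ 2 = 0 := by
      rw [hconv]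
      have := congrArg Prod.fst hνsum
      simpa [Prod.fst_sum, vec] using this
    have c2 : ∑ p ∈ F, μ' p * 1 = 0 := by
      rw [hconv]
      have := congrArg (fun x => x.2.1) hνsum
      simpa [Prod.fst_sum, Prod.snd_sum, vec] using this
    have c3 : ∑ p ∈ F, μ' p * Real.log p.2 = 0 := by
      rw [hconv]
      have := congrArg (fun x => x.2.2.1) hνsum
      simpa [Prod.fst_sum, Prod.snd_sum, vec] using this
    have c4 : ∑ p ∈ F, μ' p • p.1 = (0 : E) := by
      have := congrArg (fun x => x.2.2.2) hνsum
      have h' : ∑ q : ↥F, ν q • ((q : E × ℝ).1) = (0 : E) := by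
        simpa [Prod.fst_sum, Prod.snd_sum, vec] using this
      rw [← Finset.sum_coe_sort F (fun p => μ' p • p.1)]
      rw [← h']
      exact Finset.sum_congr rfl fun q _ => by rw [hμ'eq]
    -- the shattering assumption for T = positive coefficients
    set T : Finset (E × ℝ) := F.filter (fun p => 0 < μ' p) with hT
    obtain ⟨c, hcC, hFc⟩ := hshat T (Finset.filter_subset _ _)
    obtain ⟨f, ⟨σ, hσ, v, hf⟩, rfl⟩ := hcC
    have c4' : ∑ p ∈ F, μ' p * (inner ℝ p.1 v : ℝ) = 0 := by
      have := congrArg (fun x : E => (inner ℝ x v : ℝ)) c4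
      simpa [E, sum_inner, real_inner_smul_left] using this
    set g : E × ℝ → ℝ := fun p => -(‖p.1 - v‖ ^ 2 / (2 * σ ^ 2)) - Real.log p.2
      with hg
    have hσ2 : (0:ℝ) < σ ^ 2 := by positivity
    -- Claim A : the weighted sum is zero
    have claimA : ∑ p ∈ F, μ' p * g p = 0 := by
      have expand : ∀ p ∈ F, μ' p * g p =
          (-(1 / (2 * σ ^ 2))) * (μ' p * ‖p.1‖ ^ 2)
          + (1 / σ ^ 2) * (μ' p * (inner ℝ p.1 v : ℝ))
          + (-(‖v‖ ^ 2 / (2 * σ ^ 2))) * (μ' p * 1)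
          + (-1) * (μ' p * Real.log p.2) := by
        intro p _
        rw [hg]
        simp only
        have hne : (2 * σ ^ 2) ≠ 0 := by positivity
        rw [norm_sub_sq_real]
        generalize (inner ℝ p.1 v : ℝ) = w
        field_simp
        ring
      rw [Finset.sum_congr rfl expand]
      rw [Finset.sum_add_distrib, Finset.sum_add_distrib, Finset.sum_add_distrib,
        ← Finset.mul_sum, ← Finset.mul_sum, ← Finset.mul_sum, ← Finset.mul_sum,
        c1, c2, c3, c4']
      ring
    -- Claim B : the weighted sum is positive
    have key : ∀ p ∈ F, (p ∈ T ↔ 0 < g p) := by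
      intro p hp
      have hmem : p ∈ subgraph f ↔ p ∈ (T : Set (E × ℝ)) := by
        constructor
        · intro h; rw [← hFc]; exact ⟨hp, h⟩
        · intro h; rw [← hFc] at h; exact h.2
      have hsub : p ∈ subgraph f ↔
          Real.log p.2 < -(‖p.1 - v‖ ^ 2 / (2 * σ ^ 2)) := by
        simp only [subgraph, Set.mem_setOf_eq, hf]
        rw [Real.log_lt_iff_lt_exp (hy p hp)]
      constructor
      · intro h
        have : p ∈ subgraph f := hmem.2 (by exact_mod_cast h)
        rw [hsub] at this
        simp only [hg]; linarith
      · intro h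
        have : Real.log p.2 < -(‖p.1 - v‖ ^ 2 / (2 * σ ^ 2)) := by
          simp only [hg] at h; linarith
        have := hmem.1 (hsub.2 this)
        exact_mod_cast this
    have claimB : 0 < ∑ p ∈ F, μ' p * g p := by
      apply Finset.sum_pos'
      · intro p hp
        by_cases hpos : 0 < μ' p
        · have hpT : p ∈ T := Finset.mem_filter.2 ⟨hp, hpos⟩
          have := (key p hp).1 hpT
          positivity
        · push_neg at hpos
          have hpT : p ∉ T := fun h => hpos.not_gt (Finset.mem_filter.1 h).2
          have hgle : g p ≤ 0 := by
            by_contra hgp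
            push_neg at hgp
            exact hpT ((key p hp).2 hgp)
          have := mul_nonneg (neg_nonneg.2 hpos) (neg_nonneg.2 hgle)
          nlinarith
      · refine ⟨↑j, j.2, ?_⟩
        have hjpos : 0 < μ' ↑j := by rw [hμ'eq]; exact hj
        have hjT : (↑j : E × ℝ) ∈ T := Finset.mem_filter.2 ⟨j.2, hjpos⟩
        have := (key ↑j j.2).1 hjT
        positivity
    linarith [claimA, claimB]
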